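/- If H1 and H2 are simple finite hypergraphs, then their strong product H1⊠̂H2 is a simple hypergraph. -/

import Mathlib

/-!
Basic definitions: finite hypergraphs (a finite nonempty vertex set `V`, given by
`[Fintype V] [Nonempty V]`, together with a set of nonempty edges), walks, distance,
connectedness, simplicity, rank, colorings, Helly property, covers,
the various hypergraph products, 2-sections, and graph products.
-/

/-- A hypergraph on a vertex type `V`: a collection of nonempty edges (finite subsets of `V`). -/
structure FinHypergraph (V : Type*) where
  edges : Set (Finset V)
  nonempty_edges : ∀ e ∈ edges, e.Nonempty

namespace FinHypergraph

variable {V V₁ V₂ : Type*}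

/-- There is a walk of length `n` from `u` to `v`: a sequence of vertices `w 0, …, w n`
and edges `f 1, …, f n` with consecutive vertices distinct and both contained
in the corresponding edge. -/
def HasWalk (H : FinHypergraph V) (u v : V) (n : ℕ) : Prop :=
  ∃ (w : Fin (n + 1) → V) (f : Fin n → Finset V),
    w 0 = u ∧ w (Fin.last n) = v ∧
      ∀ i : Fin n, f i ∈ H.edges ∧ w i.castSucc ≠ w i.succ ∧
        w i.castSucc ∈ f i ∧ w i.succ ∈ f i

/-- The distance between two vertices: the minimum length of a walk joining them,
`⊤ = ∞` if there is none. -/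
noncomputable def dist (H : FinHypergraph V) (u v : V) : ℕ∞ :=
  sInf {x : ℕ∞ | ∃ n : ℕ, x = n ∧ H.HasWalk u v n}

/-- A hypergraph is connected if any two vertices are joined by a walk. -/
def Connected (H : FinHypergraph V) : Prop := ∀ u v : V, ∃ n, H.HasWalk u v n

/-- A hypergraph is simple if every edge has at least two vertices and
no edge is contained in another edge. -/
def Simple (H : FinHypergraph V) : Prop :=
  (∀ e ∈ H.edges, 2 ≤ e.card) ∧ ∀ e ∈ H.edges, ∀ f ∈ H.edges, e ⊆ f → e = f

/-- A hypergraph is loopless if every edge has at least two vertices. -/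
def Loopless (H : FinHypergraph V) : Prop := ∀ e ∈ H.edges, 2 ≤ e.card

/-- The rank: the maximum cardinality of an edge. -/
noncomputable def rank (H : FinHypergraph V) : ℕ := sSup (Finset.card '' H.edges)

/-- The anti-rank: the minimum cardinality of an edge. -/
noncomputable def antirank (H : FinHypergraph V) : ℕ := sInf (Finset.card '' H.edges)

/-- A proper coloring: no color class contains an edge. -/
def IsProperColoring (H : FinHypergraph V) {k : ℕ} (c : V → Fin k) : Prop :=
  ∀ e ∈ H.edges, ∀ i : Fin k, ¬ ∀ v ∈ e, c v = i

/-- A proper strong coloring: a proper coloring in which the vertices of every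
edge receive pairwise distinct colors. -/
def IsStrongColoring (H : FinHypergraph V) {k : ℕ} (c : V → Fin k) : Prop :=
  H.IsProperColoring c ∧ ∀ e ∈ H.edges, ∀ u ∈ e, ∀ v ∈ e, u ≠ v → c u ≠ c v

/-- The chromatic number: the least `k` admitting a proper `k`-coloring. -/
noncomputable def chromaticNumber (H : FinHypergraph V) : ℕ :=
  sInf {k : ℕ | ∃ c : V → Fin k, H.IsProperColoring c}

/-- The strong chromatic number: the least `k` admitting a proper strong `k`-coloring. -/
noncomputable def strongChromaticNumber (H : FinHypergraph V) : ℕ :=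
  sInf {k : ℕ | ∃ c : V → Fin k, H.IsStrongColoring c}

/-- The Helly property: every intersecting family of edges is a star. -/
def Helly (H : FinHypergraph V) : Prop :=
  ∀ E' ⊆ H.edges, (∀ e ∈ E', ∀ f ∈ E', ∃ x, x ∈ e ∧ x ∈ f) → ∃ v, ∀ e ∈ E', v ∈ e

/-- The covering number: the minimum cardinality of a set of vertices meeting every edge. -/
noncomputable def coverNumber (H : FinHypergraph V) : ℕ :=
  sInf {k : ℕ | ∃ T : Finset V, T.card = k ∧ ∀ e ∈ H.edges, ∃ v ∈ T, v ∈ e}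

/-- The Cartesian product of hypergraphs. -/
def cartProd (H₁ : FinHypergraph V₁) (H₂ : FinHypergraph V₂) : FinHypergraph (V₁ × V₂) where
  edges := {E | (∃ x, ∃ f ∈ H₂.edges, E = {x} ×ˢ f) ∨ ∃ e ∈ H₁.edges, ∃ y, E = e ×ˢ {y}}
  nonempty_edges := by
    rintro E (⟨x, f, hf, rfl⟩ | ⟨e, he, y, rfl⟩)
    · exact (Finset.singleton_nonempty x).product (H₂.nonempty_edges f hf)
    · exact (H₁.nonempty_edges e he).product (Finset.singleton_nonempty y)

section Products

variable [DecidableEq V₁] [DecidableEq V₂]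

/-- The minimal-rank-preserving direct product `H₁ ×̌ H₂`. -/
def minDirProd (H₁ : FinHypergraph V₁) (H₂ : FinHypergraph V₂) : FinHypergraph (V₁ × V₂) where
  edges := {E | ∃ e₁ ∈ H₁.edges, ∃ e₂ ∈ H₂.edges,
    E ⊆ e₁ ×ˢ e₂ ∧ E.card = min e₁.card e₂.card ∧
      (E.image Prod.fst).card = min e₁.card e₂.card ∧
      (E.image Prod.snd).card = min e₁.card e₂.card}
  nonempty_edges := by
    rintro E ⟨e₁, h₁, e₂, h₂, -, hc, -, -⟩
    rw [← Finset.card_pos, hc]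
    exact lt_min (Finset.card_pos.mpr (H₁.nonempty_edges e₁ h₁))
      (Finset.card_pos.mpr (H₂.nonempty_edges e₂ h₂))

/-- The maximal-rank-preserving direct product `H₁ ×̂ H₂`. -/
def maxDirProd (H₁ : FinHypergraph V₁) (H₂ : FinHypergraph V₂) : FinHypergraph (V₁ × V₂) where
  edges := {E | ∃ e₁ ∈ H₁.edges, ∃ e₂ ∈ H₂.edges,
    E ⊆ e₁ ×ˢ e₂ ∧ E.card = max e₁.card e₂.card ∧
      E.image Prod.fst = e₁ ∧ E.image Prod.snd = e₂}
  nonempty_edges := by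
    rintro E ⟨e₁, h₁, e₂, h₂, -, hc, -, -⟩
    rw [← Finset.card_pos, hc]
    exact lt_max_iff.mpr (Or.inl (Finset.card_pos.mpr (H₁.nonempty_edges e₁ h₁)))

/-- The non-rank-preserving direct product `H₁ ×̃ H₂`. -/
def nrDirProd (H₁ : FinHypergraph V₁) (H₂ : FinHypergraph V₂) : FinHypergraph (V₁ × V₂) where
  edges := {E | ∃ e ∈ H₁.edges, ∃ f ∈ H₂.edges, ∃ x ∈ e, ∃ y ∈ f,
    E = insert (x, y) ((e.erase x) ×ˢ (f.erase y))}
  nonempty_edges := by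
    rintro E ⟨e, -, f, -, x, -, y, -, rfl⟩
    exact Finset.insert_nonempty _ _

/-- The normal product `H₁ ⊠̌ H₂`: union of the Cartesian product edges and the
minimal-rank-preserving direct product edges. -/
def normalProd (H₁ : FinHypergraph V₁) (H₂ : FinHypergraph V₂) : FinHypergraph (V₁ × V₂) where
  edges := (H₁.cartProd H₂).edges ∪ (H₁.minDirProd H₂).edges
  nonempty_edges := by
    rintro E (h | h)
    · exact (H₁.cartProd H₂).nonempty_edges E h
    · exact (H₁.minDirProd H₂).nonempty_edges E h

/-- The strong product `H₁ ⊠̂ H₂`: union of the Cartesian product edges and the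
maximal-rank-preserving direct product edges. -/
def strongProd (H₁ : FinHypergraph V₁) (H₂ : FinHypergraph V₂) : FinHypergraph (V₁ × V₂) where
  edges := (H₁.cartProd H₂).edges ∪ (H₁.maxDirProd H₂).edges
  nonempty_edges := by
    rintro E (h | h)
    · exact (H₁.cartProd H₂).nonempty_edges E h
    · exact (H₁.maxDirProd H₂).nonempty_edges E h

/-- The lexicographic product `H₁ ∘ H₂`. -/
def lexProd (H₁ : FinHypergraph V₁) (H₂ : FinHypergraph V₂) : FinHypergraph (V₁ × V₂) where
  edges := {E | (E.image Prod.fst ∈ H₁.edges ∧ (E.image Prod.fst).card = E.card) ∨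
    ∃ x, ∃ e₂ ∈ H₂.edges, E = {x} ×ˢ e₂}
  nonempty_edges := by
    rintro E (⟨h₁, hc⟩ | ⟨x, e₂, h₂, rfl⟩)
    · rw [← Finset.card_pos, ← hc]
      exact Finset.card_pos.mpr (H₁.nonempty_edges _ h₁)
    · exact (Finset.singleton_nonempty x).product (H₂.nonempty_edges e₂ h₂)

end Products

/-- The square product `H₁ ■ H₂`. -/
def squareProd (H₁ : FinHypergraph V₁) (H₂ : FinHypergraph V₂) : FinHypergraph (V₁ × V₂) where
  edges := {E | ∃ e₁ ∈ H₁.edges, ∃ e₂ ∈ H₂.edges, E = e₁ ×ˢ e₂}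
  nonempty_edges := by
    rintro E ⟨e₁, h₁, e₂, h₂, rfl⟩
    exact (H₁.nonempty_edges e₁ h₁).product (H₂.nonempty_edges e₂ h₂)

/-- The 2-section of a hypergraph: distinct vertices are adjacent iff they lie
in a common edge. -/
def twoSection (H : FinHypergraph V) : SimpleGraph V where
  Adj x y := x ≠ y ∧ ∃ e ∈ H.edges, x ∈ e ∧ y ∈ e
  symm := ⟨by rintro x y ⟨hxy, e, he, hx, hy⟩; exact ⟨hxy.symm, e, he, hy, hx⟩⟩
  loopless := ⟨by rintro x ⟨hx, -⟩; exact hx rfl⟩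

end FinHypergraph

namespace SimpleGraph

variable {V₁ V₂ : Type*}

/-- The direct (tensor) product of simple graphs. -/
def directProd (G₁ : SimpleGraph V₁) (G₂ : SimpleGraph V₂) : SimpleGraph (V₁ × V₂) where
  Adj x y := G₁.Adj x.1 y.1 ∧ G₂.Adj x.2 y.2
  symm := ⟨fun _ _ ⟨h₁, h₂⟩ => ⟨h₁.symm, h₂.symm⟩⟩
  loopless := ⟨fun x h => G₁.loopless.irrefl x.1 h.1⟩

/-- The strong product of simple graphs. -/
def strongGraphProd (G₁ : SimpleGraph V₁) (G₂ : SimpleGraph V₂) : SimpleGraph (V₁ × V₂) where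
  Adj x y := x ≠ y ∧ ((x.1 = y.1 ∧ G₂.Adj x.2 y.2) ∨ (x.2 = y.2 ∧ G₁.Adj x.1 y.1) ∨
    (G₁.Adj x.1 y.1 ∧ G₂.Adj x.2 y.2))
  symm := ⟨by
    rintro x y ⟨hne, (⟨h, h'⟩ | ⟨h, h'⟩ | ⟨h, h'⟩)⟩
    · exact ⟨hne.symm, Or.inl ⟨h.symm, h'.symm⟩⟩
    · exact ⟨hne.symm, Or.inr (Or.inl ⟨h.symm, h'.symm⟩)⟩
    · exact ⟨hne.symm, Or.inr (Or.inr ⟨h.symm, h'.symm⟩)⟩⟩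
  loopless := ⟨by rintro x ⟨hx, -⟩; exact hx rfl⟩

/-- The lexicographic product of simple graphs. -/
def lexGraphProd (G₁ : SimpleGraph V₁) (G₂ : SimpleGraph V₂) : SimpleGraph (V₁ × V₂) where
  Adj x y := G₁.Adj x.1 y.1 ∨ (x.1 = y.1 ∧ G₂.Adj x.2 y.2)
  symm := ⟨by
    rintro x y (h | ⟨h, h'⟩)
    · exact Or.inl h.symm
    · exact Or.inr ⟨h.symm, h'.symm⟩⟩
  loopless := ⟨by
    rintro x (h | ⟨-, h⟩)
    · exact G₁.loopless.irrefl x.1 h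
    · exact G₂.loopless.irrefl x.2 h⟩

end SimpleGraph

lemma cart_not_subset_dir_fst {V₁ V₂ : Type*} [DecidableEq V₁] [DecidableEq V₂]
    (x : V₁) (f : Finset V₂) (F : Finset (V₁ × V₂)) (e₁ : Finset V₁) (n : ℕ)
    (hsub : ({x} ×ˢ f) ⊆ F) (himg : F.image Prod.fst = e₁)
    (hcard : F.card = max e₁.card n) (hfn : f.card = n)
    (he₁ : 2 ≤ e₁.card) (hn : 2 ≤ n) : False := by
  classical
  have h2 : ({x} ×ˢ f) ⊆ F.filter (fun p => p.1 = x) := by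
    intro p hp
    have hp' := hp
    rw [Finset.mem_product, Finset.mem_singleton] at hp'
    exact Finset.mem_filter.mpr ⟨hsub hp, hp'.1⟩
  have c1 : f.card ≤ (F.filter (fun p => p.1 = x)).card := by
    have := Finset.card_le_card h2
    simpa [Finset.card_product] using this
  have h3 : e₁.erase x ⊆ (F.filter (fun p => ¬ p.1 = x)).image Prod.fst := by
    intro a ha
    rw [Finset.mem_erase] at ha
    obtain ⟨hax, hae⟩ := ha
    rw [← himg, Finset.mem_image] at hae
    obtain ⟨p, hpF, hpa⟩ := hae
    exact Finset.mem_image.mpr ⟨p, Finset.mem_filter.mpr ⟨hpF, by rw [hpa]; exact hax⟩, hpa⟩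
  have hx : x ∈ e₁ := by
    obtain ⟨y, hy⟩ := Finset.card_pos.mp (by omega : 0 < f.card)
    have : (x, y) ∈ F := hsub (by rw [Finset.mem_product, Finset.mem_singleton]; exact ⟨rfl, hy⟩)
    rw [← himg]
    exact Finset.mem_image.mpr ⟨(x, y), this, rfl⟩
  have c2 : e₁.card - 1 ≤ (F.filter (fun p => ¬ p.1 = x)).card := by
    calc e₁.card - 1 = (e₁.erase x).card := (Finset.card_erase_of_mem hx).symm
      _ ≤ ((F.filter (fun p => ¬ p.1 = x)).image Prod.fst).card := Finset.card_le_card h3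
      _ ≤ _ := Finset.card_image_le
  have hsplit := Finset.card_filter_add_card_filter_not
    (s := F) (p := fun p => p.1 = x)
  omega

lemma cart_not_subset_dir_snd {V₁ V₂ : Type*} [DecidableEq V₁] [DecidableEq V₂]
    (y : V₂) (e : Finset V₁) (F : Finset (V₁ × V₂)) (e₂ : Finset V₂) (n : ℕ)
    (hsub : (e ×ˢ {y}) ⊆ F) (himg : F.image Prod.snd = e₂)
    (hcard : F.card = max n e₂.card) (hen : e.card = n)
    (he₂ : 2 ≤ e₂.card) (hn : 2 ≤ n) : False := by
  classical
  have h2 : (e ×ˢ {y}) ⊆ F.filter (fun p => p.2 = y) := by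
    intro p hp
    have hp' := hp
    rw [Finset.mem_product, Finset.mem_singleton] at hp'
    exact Finset.mem_filter.mpr ⟨hsub hp, hp'.2⟩
  have c1 : e.card ≤ (F.filter (fun p => p.2 = y)).card := by
    have := Finset.card_le_card h2
    simpa [Finset.card_product] using this
  have h3 : e₂.erase y ⊆ (F.filter (fun p => ¬ p.2 = y)).image Prod.snd := by
    intro a ha
    rw [Finset.mem_erase] at ha
    obtain ⟨hay, hae⟩ := ha
    rw [← himg, Finset.mem_image] at hae
    obtain ⟨p, hpF, hpa⟩ := hae
    exact Finset.mem_image.mpr ⟨p, Finset.mem_filter.mpr ⟨hpF, by rw [hpa]; exact hay⟩, hpa⟩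
  have hy : y ∈ e₂ := by
    obtain ⟨z, hz⟩ := Finset.card_pos.mp (by omega : 0 < e.card)
    have : (z, y) ∈ F := hsub (by rw [Finset.mem_product, Finset.mem_singleton]; exact ⟨hz, rfl⟩)
    rw [← himg]
    exact Finset.mem_image.mpr ⟨(z, y), this, rfl⟩
  have c2 : e₂.card - 1 ≤ (F.filter (fun p => ¬ p.2 = y)).card := by
    calc e₂.card - 1 = (e₂.erase y).card := (Finset.card_erase_of_mem hy).symm
      _ ≤ ((F.filter (fun p => ¬ p.2 = y)).image Prod.snd).card := Finset.card_le_card h3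
      _ ≤ _ := Finset.card_image_le
  have hsplit := Finset.card_filter_add_card_filter_not
    (s := F) (p := fun p => p.2 = y)
  omega

/-- the strong product of simple hypergraphs is simple. -/
theorem simple_strongProd {V₁ V₂ : Type*} [Fintype V₁] [Nonempty V₁] [DecidableEq V₁]
    [Fintype V₂] [Nonempty V₂] [DecidableEq V₂] (H₁ : FinHypergraph V₁) (H₂ : FinHypergraph V₂)
    (h₁ : H₁.Simple) (h₂ : H₂.Simple) :
    (H₁.strongProd H₂).Simple := by
  obtain ⟨h₁c, h₁m⟩ := h₁
  obtain ⟨h₂c, h₂m⟩ := h₂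
  constructor
  · rintro E hE
    simp only [FinHypergraph.strongProd, FinHypergraph.cartProd, FinHypergraph.maxDirProd,
      Set.mem_union, Set.mem_setOf_eq] at hE
    rcases hE with (⟨x, f, hf, rfl⟩ | ⟨e, he, y, rfl⟩) | ⟨e₁, he₁, e₂, he₂, -, hc, -, -⟩
    · simpa [Finset.card_product] using h₂c f hf
    · simpa [Finset.card_product] using h₁c e he
    · rw [hc]; exact le_max_of_le_left (h₁c e₁ he₁)
  · rintro E hE F hF hEF
    simp only [FinHypergraph.strongProd, FinHypergraph.cartProd, FinHypergraph.maxDirProd,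
      Set.mem_union, Set.mem_setOf_eq] at hE hF
    rcases hE with (⟨x, f, hf, rfl⟩ | ⟨e, he, y, rfl⟩) | ⟨e₁, he₁, e₂, he₂, hEsub, hEc, hE1, hE2⟩
    · -- E = {x} ×ˢ f
      obtain ⟨a, ha⟩ := H₂.nonempty_edges f hf
      have hxa : (x, a) ∈ ({x} ×ˢ f) :=
        Finset.mem_product.mpr ⟨Finset.mem_singleton_self x, ha⟩
      rcases hF with (⟨x', f', hf', rfl⟩ | ⟨e', he', y', rfl⟩) |
        ⟨e₁, he₁, e₂, he₂, hFsub, hFc, hF1, hF2⟩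
      · -- F = {x'} ×ˢ f'
        have hxx : x = x' := by
          have := hEF hxa
          rw [Finset.mem_product, Finset.mem_singleton] at this
          exact this.1
        have hff : f ⊆ f' := by
          intro b hb
          have := hEF (Finset.mem_product.mpr
            ⟨Finset.mem_singleton_self x, hb⟩ : (x, b) ∈ ({x} ×ˢ f))
          rw [Finset.mem_product] at this
          exact this.2
        rw [hxx, h₂m f hf f' hf' hff]
      · -- F = e' ×ˢ {y'} : impossible
        exfalso
        obtain ⟨a', ha', b', hb', hab⟩ := Finset.one_lt_card.mp (h₂c f hf)
        have h1 := hEF (Finset.mem_product.mpr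
          ⟨Finset.mem_singleton_self x, ha'⟩ : (x, a') ∈ ({x} ×ˢ f))
        have h2 := hEF (Finset.mem_product.mpr
          ⟨Finset.mem_singleton_self x, hb'⟩ : (x, b') ∈ ({x} ×ˢ f))
        rw [Finset.mem_product, Finset.mem_singleton] at h1 h2
        exact hab (h1.2.trans h2.2.symm)
      · -- F direct : impossible
        exfalso
        have hfe₂ : f ⊆ e₂ := by
          intro b hb
          have := hFsub (hEF (Finset.mem_product.mpr
            ⟨Finset.mem_singleton_self x, hb⟩ : (x, b) ∈ ({x} ×ˢ f)))
          rw [Finset.mem_product] at this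
          exact this.2
        have hfeq : f = e₂ := h₂m f hf e₂ he₂ hfe₂
        exact cart_not_subset_dir_fst x f F e₁ e₂.card hEF hF1 hFc
          (by rw [hfeq]) (h₁c e₁ he₁) (h₂c e₂ he₂)
    · -- E = e ×ˢ {y}
      rcases hF with (⟨x', f', hf', rfl⟩ | ⟨e', he', y', rfl⟩) |
        ⟨e₁, he₁, e₂, he₂, hFsub, hFc, hF1, hF2⟩
      · -- F = {x'} ×ˢ f' : impossible
        exfalso
        obtain ⟨a', ha', b', hb', hab⟩ := Finset.one_lt_card.mp (h₁c e he)
        have h1 := hEF (Finset.mem_product.mpr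
          ⟨ha', Finset.mem_singleton_self y⟩ : (a', y) ∈ (e ×ˢ {y}))
        have h2 := hEF (Finset.mem_product.mpr
          ⟨hb', Finset.mem_singleton_self y⟩ : (b', y) ∈ (e ×ˢ {y}))
        rw [Finset.mem_product, Finset.mem_singleton] at h1 h2
        exact hab (h1.1.trans h2.1.symm)
      · -- F = e' ×ˢ {y'}
        obtain ⟨a, ha⟩ := H₁.nonempty_edges e he
        have hyy : y = y' := by
          have := hEF (Finset.mem_product.mpr
            ⟨ha, Finset.mem_singleton_self y⟩ : (a, y) ∈ (e ×ˢ {y}))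
          rw [Finset.mem_product, Finset.mem_singleton] at this
          exact this.2
        have hee : e ⊆ e' := by
          intro b hb
          have := hEF (Finset.mem_product.mpr
            ⟨hb, Finset.mem_singleton_self y⟩ : (b, y) ∈ (e ×ˢ {y}))
          rw [Finset.mem_product] at this
          exact this.1
        rw [hyy, h₁m e he e' he' hee]
      · -- F direct : impossible
        exfalso
        have hee₁ : e ⊆ e₁ := by
          intro b hb
          have := hFsub (hEF (Finset.mem_product.mpr
            ⟨hb, Finset.mem_singleton_self y⟩ : (b, y) ∈ (e ×ˢ {y})))
          rw [Finset.mem_product] at this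
          exact this.1
        have heeq : e = e₁ := h₁m e he e₁ he₁ hee₁
        exact cart_not_subset_dir_snd y e F e₂ e₁.card hEF hF2 hFc
          (by rw [heeq]) (h₂c e₂ he₂) (h₁c e₁ he₁)
    · -- E direct
      rcases hF with (⟨x', f', hf', rfl⟩ | ⟨e', he', y', rfl⟩) |
        ⟨f₁, hf₁, f₂, hf₂, hFsub, hFc, hF1, hF2⟩
      · -- F = {x'} ×ˢ f' : impossible
        exfalso
        have hsub : e₁ ⊆ {x'} := by
          rw [← hE1]
          intro a ha
          obtain ⟨p, hp, rfl⟩ := Finset.mem_image.mp ha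
          have := hEF hp
          rw [Finset.mem_product, Finset.mem_singleton] at this
          rw [Finset.mem_singleton]
          exact this.1
        have hle := Finset.card_le_card hsub
        rw [Finset.card_singleton] at hle
        have := h₁c e₁ he₁
        omega
      · -- F = e' ×ˢ {y'} : impossible
        exfalso
        have hsub : e₂ ⊆ {y'} := by
          rw [← hE2]
          intro a ha
          obtain ⟨p, hp, rfl⟩ := Finset.mem_image.mp ha
          have := hEF hp
          rw [Finset.mem_product, Finset.mem_singleton] at this
          rw [Finset.mem_singleton]
          exact this.2
        have hle := Finset.card_le_card hsub
        rw [Finset.card_singleton] at hle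
        have := h₂c e₂ he₂
        omega
      · -- F direct
        have h1 : e₁ ⊆ f₁ := by
          rw [← hE1, ← hF1]; exact Finset.image_subset_image hEF
        have h2 : e₂ ⊆ f₂ := by
          rw [← hE2, ← hF2]; exact Finset.image_subset_image hEF
        have he1 : e₁ = f₁ := h₁m e₁ he₁ f₁ hf₁ h1
        have he2 : e₂ = f₂ := h₂m e₂ he₂ f₂ hf₂ h2
        exact Finset.eq_of_subset_of_card_le hEF (by rw [hFc, hEc, he1, he2])
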